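/- Let (A, •, ⟨ , ⟩) be a pseudo-Euclidean 2-step nilpotent symmetric Leibniz algebra obtained from a Lie algebra (A, [ , ]) by u•v = [u,v] + μ(u,v), where μ is a symmetric bilinear map valued in the center with μ([u,v],w) = μ(μ(u,v),w) = 0. Then ⟨ , ⟩ is invariant for • if and only if ⟨ , ⟩ is invariant for [ , ] and there exist a symmetric trilinear form T: A×A×A → K and a totally isotropic subspace J ⊆ Z(A) with T(J^⊥, ·, ·) = 0 and ⟨μ(u,v), w⟩ = T(u,v,w) for all u,v,w. -/
import Mathlib


/-- Characterization of invariance of the bilinear form on a pseudo-Euclidean 2-step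
nilpotent symmetric Leibniz algebra obtained from a Lie algebra by means of μ. -/
theorem invariance_characterization_twoStep
    {K A : Type*} [Field K] [AddCommGroup A] [Module K A]
    (htwo : (2 : K) ≠ 0)
    (br μ : A →ₗ[K] A →ₗ[K] A)
    (hanti : ∀ u v : A, br u v = -(br v u))
    (hjac : ∀ u v w : A, br (br u v) w + br (br v w) u + br (br w u) v = 0)
    (hnil : ∀ u v w : A, br (br u v) w = 0)
    (hμsym : ∀ u v : A, μ u v = μ v u)
    (hcenter : ∀ u v w : A, br (μ u v) w = 0)
    (hμbr : ∀ u v w : A, μ (br u v) w = 0)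
    (hμμ : ∀ u v w : A, μ (μ u v) w = 0)
    (bullet : A → A → A)
    (hbullet : ∀ u v : A, bullet u v = br u v + μ u v)
    (B : LinearMap.BilinForm K A)
    (hsymm : ∀ u v : A, B u v = B v u)
    (hnd : ∀ v : A, (∀ u : A, B u v = 0) → v = 0) :
    (∀ u v w : A, B (bullet u v) w = B u (bullet v w)) ↔
    ((∀ u v w : A, B (br u v) w = B u (br v w)) ∧
     ∃ (T : A →ₗ[K] A →ₗ[K] A →ₗ[K] K) (J : Submodule K A),
       (∀ u v w : A, T u v w = T v u w) ∧
       (∀ u v w : A, T u v w = T u w v) ∧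
       (∀ z ∈ J, ∀ u : A, br z u = 0) ∧
       (∀ x ∈ J, ∀ y ∈ J, B x y = 0) ∧
       (∀ x ∈ B.orthogonal J, ∀ v w : A, T x v w = 0) ∧
       (∀ u v w : A, B (μ u v) w = T u v w)) := by
  constructor
  · intro hinv
    -- basic expanded invariance
    have hE : ∀ u v w : A, B (br u v) w + B (μ u v) w = B (br v w) u + B (μ v w) u := by
      intro u v w
      have h := hinv u v w
      rw [hbullet, hbullet, hsymm u (br v w + μ v w)] at h
      simpa [map_add, LinearMap.add_apply] using h
    -- cyclic invariance of Q u v w := B (μ u v) w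
    have hQ : ∀ u v w : A, B (μ u v) w = B (μ v w) u := by
      intro u v w
      have e1 := hE u v w
      have e2 := hE v u w
      have e4 := hE u w v
      rw [hanti v u, hμsym v u, map_neg, LinearMap.neg_apply] at e2
      rw [hanti w v, hμsym w v, map_neg, LinearMap.neg_apply] at e4
      have h2 : (2 : K) * (B (μ u v) w) = (2 : K) * (B (μ v w) u) := by
        linear_combination e1 + e2 + e4
      exact mul_left_cancel₀ htwo h2
    -- invariance of br
    have hP : ∀ u v w : A, B (br u v) w = B u (br v w) := by
      intro u v w
      rw [hsymm u (br v w)]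
      have e1 := hE u v w
      have q := hQ u v w
      linear_combination e1 - q
    refine ⟨hP, μ.compr₂ B, Submodule.span K (Set.range fun p : A × A => μ p.1 p.2),
      ?_, ?_, ?_, ?_, ?_, ?_⟩
    · intro u v w
      simp only [LinearMap.compr₂_apply]
      rw [hμsym u v]
    · intro u v w
      simp only [LinearMap.compr₂_apply]
      -- B (μ u v) w = B (μ u w) v
      rw [hQ u v w, hQ v w u, hμsym w u]
    · intro z hz u
      induction hz using Submodule.span_induction with
      | mem x hx =>
        obtain ⟨p, rfl⟩ := hx
        exact hcenter p.1 p.2 u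
      | zero => simp
      | add x y _ _ hx hy => simp [map_add, LinearMap.add_apply, hx, hy]
      | smul c x _ hx => simp [map_smul, LinearMap.smul_apply, hx]
    · -- totally isotropic
      have key : ∀ y ∈ Submodule.span K (Set.range fun p : A × A => μ p.1 p.2),
          ∀ a b : A, B (μ a b) y = 0 := by
        intro y hy
        induction hy using Submodule.span_induction with
        | mem x hx =>
          intro a b
          obtain ⟨p, rfl⟩ := hx
          -- B (μ a b) (μ c d) = 0
          rw [hQ a b (μ p.1 p.2), hsymm (μ b (μ p.1 p.2)) a, hμsym b (μ p.1 p.2)]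
          simp [hμμ]
        | zero => intro a b; simp
        | add x y _ _ hx hy => intro a b; simp [hx a b, hy a b]
        | smul c x _ hx => intro a b; simp [hx a b]
      intro x hx y hy
      induction hx using Submodule.span_induction with
      | mem z hz =>
        obtain ⟨p, rfl⟩ := hz
        exact key y hy p.1 p.2
      | zero => simp
      | add a b _ _ ha hb => simp [map_add, LinearMap.add_apply, ha, hb]
      | smul c a _ ha => simp [map_smul, LinearMap.smul_apply, ha]
    · intro x hx v w
      simp only [LinearMap.compr₂_apply]
      have hm : μ v w ∈ Submodule.span K (Set.range fun p : A × A => μ p.1 p.2) :=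
        Submodule.subset_span ⟨(v, w), rfl⟩
      rw [hQ x v w]
      exact hx (μ v w) hm
    · intro u v w
      simp [LinearMap.compr₂_apply]
  · rintro ⟨hbrinv, T, J, hT1, hT2, _, _, _, hT6⟩
    intro u v w
    rw [hbullet, hbullet, map_add, LinearMap.add_apply, map_add]
    rw [hbrinv u v w]
    congr 1
    rw [hsymm u (μ v w), hT6 u v w, hT6 v w u, hT1 u v w, hT2 v u w]
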